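/- Let T be a positive trace-preserving linear map on M_n, A = I − T, and A^# the group inverse of A (which exists). Then for every state ρ, the matrix (I − A^#A)(ρ) is an invariant state of T: it is positive semidefinite, has trace 1, and T((I − A^#A)(ρ)) = (I − A^#A)(ρ). -/

import Mathlib

open Matrix
open scoped ComplexOrder

noncomputable section

/-- The algebra of `n × n` complex matrices. -/
abbrev Mn (n : ℕ) : Type := Matrix (Fin n) (Fin n) ℂ

/-- The map `X ↦ Q X Q`. -/
def sandwich {n : ℕ} (Q : Mn n) : Module.End ℂ (Mn n) :=
  (LinearMap.mulLeft ℂ Q).comp (LinearMap.mulRight ℂ Q)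

/-- The sum of the two components of a pair. -/
def sumPair (n : ℕ) : (Mn n × Mn n) →ₗ[ℂ] Mn n :=
  LinearMap.fst ℂ (Mn n) (Mn n) + LinearMap.snd ℂ (Mn n) (Mn n)

/-- The QMC `Λ_{T,V}` induced by the channel `T` and the subspace `V` (with orthogonal
projection `P` onto `V` and `Q = I − P`):
`Λ(X₁,X₂) = ((I−ℚ)(T(X₁+X₂)), ℚ(T(X₁+X₂)))` where `ℚ(Y) = QYQ`. -/
def Lam {n : ℕ} (T : Module.End ℂ (Mn n)) (Q : Mn n) : Module.End ℂ (Mn n × Mn n) :=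
  LinearMap.prod
    (((1 : Module.End ℂ (Mn n)) - sandwich Q) ∘ₗ (T ∘ₗ sumPair n))
    ((sandwich Q) ∘ₗ (T ∘ₗ sumPair n))

/-- `ℙ₁(X₁,X₂) = (X₁,0)`. -/
def proj1 (n : ℕ) : Module.End ℂ (Mn n × Mn n) :=
  (LinearMap.inl ℂ (Mn n) (Mn n)).comp (LinearMap.fst ℂ (Mn n) (Mn n))

/-- `ℙ₂(X₁,X₂) = (0,X₂)`. -/
def proj2 (n : ℕ) : Module.End ℂ (Mn n × Mn n) :=
  (LinearMap.inr ℂ (Mn n) (Mn n)).comp (LinearMap.snd ℂ (Mn n) (Mn n))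

/-- The block-diagonal part `S_d = diag(S₁₁,S₂₂)` of a map on `M_n ⊕ M_n`. -/
def diagPart {n : ℕ} (S : Module.End ℂ (Mn n × Mn n)) : Module.End ℂ (Mn n × Mn n) :=
  proj1 n * S * proj1 n + proj2 n * S * proj2 n

/-- The map `E(X₁,X₂) = (X₁+X₂, X₁+X₂)`. -/
def Emap (n : ℕ) : Module.End ℂ (Mn n × Mn n) :=
  LinearMap.prod (sumPair n) (sumPair n)

/-- The map `Θ_W(X₁,X₂) = Tr(X₁+X₂)·W`. -/
def Theta {n : ℕ} (W : Mn n × Mn n) : Module.End ℂ (Mn n × Mn n) :=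
  ((Matrix.traceLinearMap (Fin n) ℂ ℂ) ∘ₗ sumPair n).smulRight W

/-- The mean hitting time `τ(ρ → V) = Σ_{r ≥ 1} r·Tr(ℙT(ℚT)^{r−1} ρ)`. -/
def tau {n : ℕ} (T : Module.End ℂ (Mn n)) (P Q : Mn n) (ρ : Mn n) : ℂ :=
  ∑' r : ℕ, ((r : ℂ) + 1) * ((sandwich P * T * (sandwich Q * T) ^ r) ρ).trace

/-- The pure state `ρ_φ = |φ⟩⟨φ|`. -/
def rhoOf {n : ℕ} (φ : Fin n → ℂ) : Mn n := Matrix.vecMulVec φ (star φ)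

/-- A positive map on `M_n`. -/
def IsPosMap {n : ℕ} (T : Module.End ℂ (Mn n)) : Prop :=
  ∀ X : Mn n, X.PosSemidef → (T X).PosSemidef

/-- A trace-preserving map on `M_n`. -/
def IsTracePreserving {n : ℕ} (T : Module.End ℂ (Mn n)) : Prop :=
  ∀ X : Mn n, (T X).trace = X.trace

/-- A quantum channel: a completely positive trace-preserving map, given by a Kraus
decomposition `T(X) = Σᵢ Vᵢ X Vᵢ*` with `Σᵢ Vᵢ* Vᵢ = I`. -/
def IsChannel {n : ℕ} (T : Module.End ℂ (Mn n)) : Prop :=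
  ∃ (k : ℕ) (V : Fin k → Mn n),
    (∀ X : Mn n, T X = ∑ i, V i * X * (V i)ᴴ) ∧ (∑ i, (V i)ᴴ * V i = 1)

/-- Irreducibility of a positive map on `M_n`: the only orthogonal projections `P` with
`T(P M_n P) ⊆ P M_n P` are `P = 0` and `P = I`. -/
def IsIrreducibleMap {n : ℕ} (T : Module.End ℂ (Mn n)) : Prop :=
  ∀ P : Mn n, P.IsHermitian → P * P = P →
    (∀ X : Mn n, ∃ Y : Mn n, T (P * X * P) = P * Y * P) → P = 0 ∨ P = 1


/-! ### Auxiliary lemmas for `stmt9` -/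

open Finset in
/-- entrywise 1-norm of a matrix -/
def nrm {n : ℕ} (M : Mn n) : ℝ := ∑ i, ∑ j, ‖M i j‖

lemma nrm_nonneg {n : ℕ} (M : Mn n) : 0 ≤ nrm M := by
  apply Finset.sum_nonneg; intro i _; apply Finset.sum_nonneg; intro j _; positivity

lemma entry_le_nrm {n : ℕ} (M : Mn n) (i j : Fin n) : ‖M i j‖ ≤ nrm M := by
  have h1 : ‖M i j‖ ≤ ∑ j, ‖M i j‖ :=
    Finset.single_le_sum (f := fun j => ‖M i j‖) (fun _ _ => norm_nonneg _)
      (Finset.mem_univ j)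
  refine h1.trans ?_
  exact Finset.single_le_sum (f := fun i => ∑ j, ‖M i j‖)
    (fun _ _ => Finset.sum_nonneg fun _ _ => norm_nonneg _) (Finset.mem_univ i)

lemma nrm_add_le {n : ℕ} (M N : Mn n) : nrm (M + N) ≤ nrm M + nrm N := by
  unfold nrm
  rw [← Finset.sum_add_distrib]
  refine Finset.sum_le_sum fun i _ => ?_
  rw [← Finset.sum_add_distrib]
  exact Finset.sum_le_sum fun j _ => norm_add_le _ _

lemma nrm_sub_le {n : ℕ} (M N : Mn n) : nrm (M - N) ≤ nrm M + nrm N := by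
  have := nrm_add_le M (-N)
  simpa [nrm, sub_eq_add_neg] using this

lemma nrm_smul {n : ℕ} (c : ℂ) (M : Mn n) : nrm (c • M) = ‖c‖ * nrm M := by
  simp [nrm, Finset.mul_sum, norm_mul]

lemma nrm_sum_le {n : ℕ} {ι : Type*} (s : Finset ι) (f : ι → Mn n) :
    nrm (∑ x ∈ s, f x) ≤ ∑ x ∈ s, nrm (f x) := by
  classical
  induction s using Finset.induction with
  | empty => simp [nrm]
  | insert _ _ hx ih =>
    rw [Finset.sum_insert hx, Finset.sum_insert hx]
    exact (nrm_add_le _ _).trans (by linarith)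

lemma nrm_le_card_mul {n : ℕ} (M : Mn n) (c : ℝ) (h : ∀ i j, ‖M i j‖ ≤ c) :
    nrm M ≤ (n : ℝ)^2 * c := by
  have : nrm M ≤ ∑ _i : Fin n, ∑ _j : Fin n, c :=
    Finset.sum_le_sum fun i _ => Finset.sum_le_sum fun j _ => h i j
  simpa [Finset.sum_const, mul_assoc, sq] using this

/-- quadratic form bound -/
lemma form_bound {n : ℕ} (M : Mn n) (v : Fin n → ℂ) :
    ‖star v ⬝ᵥ M *ᵥ v‖ ≤ nrm M * (∑ i, ‖v i‖)^2 := by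
  have hV : ∀ i, ‖v i‖ ≤ ∑ i, ‖v i‖ := fun i =>
    Finset.single_le_sum (f := fun i => ‖v i‖) (fun _ _ => norm_nonneg _)
      (Finset.mem_univ i)
  have hV0 : 0 ≤ ∑ i, ‖v i‖ := Finset.sum_nonneg fun _ _ => norm_nonneg _
  calc ‖star v ⬝ᵥ M *ᵥ v‖ = ‖∑ i, (starRingEnd ℂ) (v i) * ∑ j, M i j * v j‖ := by
        simp [dotProduct, mulVec, Pi.star_apply, RCLike.star_def]
    _ ≤ ∑ i, ‖(starRingEnd ℂ) (v i) * ∑ j, M i j * v j‖ := norm_sum_le _ _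
    _ ≤ ∑ i, ∑ j, ‖v i‖ * (‖M i j‖ * ‖v j‖) := by
        refine Finset.sum_le_sum fun i _ => ?_
        rw [norm_mul, RingHomIsometric.norm_map]
        rw [← Finset.mul_sum]
        refine mul_le_mul_of_nonneg_left ?_ (norm_nonneg _)
        refine (norm_sum_le _ _).trans ?_
        exact Finset.sum_le_sum fun j _ => by rw [norm_mul]
    _ ≤ ∑ i, ∑ j, ‖M i j‖ * ((∑ i, ‖v i‖) * (∑ i, ‖v i‖)) := by
        refine Finset.sum_le_sum fun i _ => Finset.sum_le_sum fun j _ => ?_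
        have := mul_le_mul (hV i) (mul_le_mul_of_nonneg_left (hV j) (norm_nonneg (M i j)))
          (by positivity) hV0
        nlinarith [norm_nonneg (M i j), norm_nonneg (v i), norm_nonneg (v j), hV i, hV j]
    _ = nrm M * (∑ i, ‖v i‖)^2 := by
        simp [nrm, ← Finset.sum_mul, sq]

lemma sum_two_aux {α : Type*} [Fintype α] [DecidableEq α] {i j : α} (hij : i ≠ j)
    (g : α → ℂ) (a b : ℂ) :
    ∑ p, (if p = i then a else if p = j then b else 0) * g p = a * g i + b * g j := by
  rw [Finset.sum_congr rfl
    (g := fun p => (if p = i then a * g i else 0) + (if p = j then b * g j else 0))]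
  · rw [Finset.sum_add_distrib, Finset.sum_ite_eq', Finset.sum_ite_eq']
    simp
  · intro p _
    split_ifs with h1 h2 <;> subst_vars <;> simp_all

lemma psd_diag {n : ℕ} {X : Mn n} (hX : X.PosSemidef) (p : Fin n) : 0 ≤ X p p := by
  have := hX.dotProduct_mulVec_nonneg (Pi.single p 1)
  simpa [dotProduct, mulVec, Pi.single_apply, mul_ite, ite_mul] using this

lemma psd_entry_le {n : ℕ} {X : Mn n} (hX : X.PosSemidef) (i j : Fin n) :
    ‖X i j‖ ≤ X.trace.re := by
  have hdre : ∀ p, 0 ≤ (X p p).re ∧ 0 = (X p p).im := by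
    intro p
    have := psd_diag hX p
    rw [Complex.le_def] at this
    simpa using this
  have htr : X.trace.re = ∑ p, (X p p).re := by
    simp [Matrix.trace, Matrix.diag, Complex.re_sum]
  have hnorm_diag : ∀ p, ‖X p p‖ = (X p p).re := by
    intro p
    rw [Complex.norm_def, Complex.normSq_apply, ← (hdre p).2]
    simp [Real.sqrt_mul_self (hdre p).1]
  by_cases hij : i = j
  · subst hij
    rw [hnorm_diag i, htr]
    exact Finset.single_le_sum (f := fun p => (X p p).re) (fun p _ => (hdre p).1)
      (Finset.mem_univ i)
  · set w := X i j with hw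
    have hsum2 : (X i i).re + (X j j).re ≤ X.trace.re := by
      rw [htr]
      have h1 : ∑ p ∈ ({i, j} : Finset (Fin n)), (X p p).re
          ≤ ∑ p, (X p p).re :=
        Finset.sum_le_sum_of_subset_of_nonneg (Finset.subset_univ _)
          (fun p _ _ => (hdre p).1)
      rwa [Finset.sum_pair hij] at h1
    by_cases hw0 : w = 0
    · rw [hw0, norm_zero, htr]
      exact Finset.sum_nonneg fun p _ => (hdre p).1
    · set x : Fin n → ℂ := fun p => if p = i then -w else if p = j then ((‖w‖:ℝ):ℂ) else 0
        with hx
      have hq := hX.dotProduct_mulVec_nonneg x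
      have hji : X j i = (starRingEnd ℂ) w := by
        have h0 := congrFun (congrFun hX.1 j) i
        rw [conjTranspose_apply] at h0
        rw [hw, ← h0]; rfl
      have hmul : (starRingEnd ℂ) w * w = ((‖w‖:ℝ):ℂ)^2 := by
        rw [mul_comm, Complex.mul_conj']
      have hexp : star x ⬝ᵥ X *ᵥ x =
          ((‖w‖ : ℝ) : ℂ)^2 * (X i i + X j j) - 2 * ((‖w‖ : ℝ) : ℂ)^3 := by
        have hstarx : star x = fun p =>
            if p = i then -(starRingEnd ℂ) w else if p = j then ((‖w‖:ℝ):ℂ) else 0 := by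
          funext p
          rw [Pi.star_apply, hx]
          dsimp only
          split_ifs <;> simp [Complex.star_def, Complex.conj_ofReal]
        have hmv : X *ᵥ x = fun p => -w * X p i + ((‖w‖:ℝ):ℂ) * X p j := by
          funext p
          show ∑ q, X p q * x q = _
          rw [Finset.sum_congr rfl (g := fun q =>
            (if q = i then (-w : ℂ) else if q = j then ((‖w‖:ℝ):ℂ) else 0) * X p q)
            (fun q _ => by rw [hx]; ring)]
          exact sum_two_aux hij _ _ _
        rw [hstarx, hmv]
        show ∑ p, (if p = i then -(starRingEnd ℂ) w else if p = j then ((‖w‖:ℝ):ℂ) else 0)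
            * (-w * X p i + ((‖w‖:ℝ):ℂ) * X p j) = _
        rw [sum_two_aux hij]
        rw [← hw, hji]
        linear_combination (X i i - 2*((‖w‖:ℝ):ℂ)) * hmul
      rw [hexp, Complex.le_def] at hq
      have hre : 0 ≤ ‖w‖^2 * ((X i i).re + (X j j).re) - 2*‖w‖^3 := by
        have h := hq.1
        have e2 : ((‖w‖:ℝ):ℂ)^2 * (X i i + X j j) - 2 * ((‖w‖:ℝ):ℂ)^3
            = ((‖w‖^2 : ℝ):ℂ) * (X i i + X j j) - ((2*‖w‖^3 : ℝ):ℂ) := by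
          push_cast; ring
        rw [e2] at h
        simp only [Complex.sub_re, Complex.re_ofReal_mul, Complex.ofReal_re,
          Complex.add_re, Complex.zero_re] at h
        linarith [h]
      have hwpos : 0 < ‖w‖ := norm_pos_iff.mpr hw0
      nlinarith [hre, hsum2, hwpos, mul_pos hwpos hwpos]

lemma nrm_end_le {n : ℕ} (L : Module.End ℂ (Mn n)) (M : Mn n) :
    nrm (L M) ≤ (∑ p, ∑ q, nrm (L (Matrix.single p q 1))) * nrm M := by
  have hM : M = ∑ p, ∑ q, (M p q) • Matrix.single p q (1 : ℂ) := by
    conv_lhs => rw [matrix_eq_sum_single M]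
    refine Finset.sum_congr rfl fun p _ => Finset.sum_congr rfl fun q _ => ?_
    rw [smul_single, smul_eq_mul, mul_one]
  calc nrm (L M) = nrm (∑ p, ∑ q, (M p q) • L (Matrix.single p q 1)) := by
        conv_lhs => rw [hM]
        rw [map_sum]
        congr 1
        refine Finset.sum_congr rfl fun p _ => ?_
        rw [map_sum]
        refine Finset.sum_congr rfl fun q _ => ?_
        rw [_root_.map_smul]
    _ ≤ ∑ p, ∑ q, nrm ((M p q) • L (Matrix.single p q 1)) := by
        refine (nrm_sum_le _ _).trans (Finset.sum_le_sum fun p _ => nrm_sum_le _ _)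
    _ ≤ ∑ p, ∑ q, nrm (L (Matrix.single p q 1)) * nrm M := by
        refine Finset.sum_le_sum fun p _ => Finset.sum_le_sum fun q _ => ?_
        rw [nrm_smul]
        exact mul_le_mul_of_nonneg_right (entry_le_nrm M p q) (nrm_nonneg _) |>.trans_eq
          (by rw [mul_comm]) |>.trans_eq (by rw [mul_comm])
    _ = (∑ p, ∑ q, nrm (L (Matrix.single p q 1))) * nrm M := by
        rw [Finset.sum_mul]
        exact Finset.sum_congr rfl fun p _ => (Finset.sum_mul _ _ _).symm

lemma le_zero_of_forall_le_div {a D : ℝ} (h : ∀ N : ℕ, a ≤ D / (N + 1)) : a ≤ 0 := by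
  by_contra hc
  push_neg at hc
  obtain ⟨N, hN⟩ := exists_nat_gt (D / a)
  have hN1 : (0:ℝ) < N + 1 := by positivity
  have h2 : D / a < N + 1 := hN.trans (by linarith)
  have h3 : D < a * (N + 1) := by
    rw [div_lt_iff₀ hc] at h2
    linarith
  have h4 : D / (N+1) < a := by
    rw [div_lt_iff₀ hN1]
    linarith
  exact absurd (h N) (not_le.mpr h4)

lemma nonneg_of_forall_ge {a D : ℝ} (h : ∀ N : ℕ, -(D / (N + 1)) ≤ a) : 0 ≤ a := by
  have := le_zero_of_forall_le_div (a := -a) (D := D) fun N => by linarith [h N]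
  linarith

lemma eq_zero_of_forall_abs_le {a D : ℝ} (h : ∀ N : ℕ, |a| ≤ D / (N + 1)) : a = 0 :=
  abs_eq_zero.mp (le_antisymm (le_zero_of_forall_le_div h) (abs_nonneg a))

open Finset in
lemma dot_sum_aux {n : ℕ} {ι : Type*} (s : Finset ι) (f : ι → Mn n) (v : Fin n → ℂ) :
    star v ⬝ᵥ (∑ x ∈ s, f x) *ᵥ v = ∑ x ∈ s, star v ⬝ᵥ (f x) *ᵥ v := by
  classical
  induction s using Finset.induction with
  | empty => simp
  | insert _ _ hx ih =>
    rw [Finset.sum_insert hx, Finset.sum_insert hx, add_mulVec, dotProduct_add, ih]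

/-- For a positive trace-preserving `T`, `A = I − T` and `A^#` its group
inverse, `(I − A^#A)(ρ)` is an invariant state of `T` for every state `ρ`. -/
theorem stmt9 {n : ℕ} (T : Module.End ℂ (Mn n))
    (hTpos : IsPosMap T) (hTtr : IsTracePreserving T)
    (A B : Module.End ℂ (Mn n)) (hA : A = 1 - T)
    (hB1 : A * B * A = A) (hB2 : B * A * B = B) (hB3 : A * B = B * A)
    (ρ : Mn n) (hρpsd : ρ.PosSemidef) (hρtr : ρ.trace = 1) :
    (((1 : Module.End ℂ (Mn n)) - B * A) ρ).PosSemidef ∧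
    (((1 : Module.End ℂ (Mn n)) - B * A) ρ).trace = 1 ∧
    T (((1 : Module.End ℂ (Mn n)) - B * A) ρ) = ((1 : Module.End ℂ (Mn n)) - B * A) ρ := by
  classical
  -- basic operator algebra
  have h1 : A * (1 - B * A) = 0 := by
    rw [mul_sub, mul_one, ← mul_assoc, hB1, sub_self]
  have hT : T = 1 - A := by rw [hA, sub_sub_cancel]
  have hTfix : T * (1 - B * A) = 1 - B * A := by
    rw [hT, sub_mul, one_mul, h1, sub_zero]
  -- invariance
  have hinv : T (((1 : Module.End ℂ (Mn n)) - B * A) ρ)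
      = ((1 : Module.End ℂ (Mn n)) - B * A) ρ := by
    have := LinearMap.congr_fun hTfix ρ
    rwa [Module.End.mul_apply] at this
  -- trace
  have htrace : (((1 : Module.End ℂ (Mn n)) - B * A) ρ).trace = 1 := by
    have e1 : ((1 : Module.End ℂ (Mn n)) - B * A) ρ = ρ - A (B ρ) := by
      rw [LinearMap.sub_apply, Module.End.one_apply, ← hB3, Module.End.mul_apply]
    have e2 : (A (B ρ)).trace = 0 := by
      rw [hA, LinearMap.sub_apply, Module.End.one_apply, Matrix.trace_sub, hTtr, sub_self]
    rw [e1, Matrix.trace_sub, e2, hρtr, sub_zero]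
  -- commuting facts
  have hc : Commute B T := by
    show B * T = T * B
    rw [hT, mul_sub, sub_mul, mul_one, one_mul, hB3]
  have hTkA : ∀ k : ℕ, T ^ k * A = T ^ k - T ^ (k + 1) := by
    intro k
    rw [hA, mul_sub, mul_one, pow_succ]
  have hTkfix : ∀ k : ℕ, T ^ k * (1 - B * A) = 1 - B * A := by
    intro k
    induction k with
    | zero => rw [pow_zero, one_mul]
    | succ k ih => rw [pow_succ, mul_assoc, hTfix, ih]
  have hpt : ∀ k : ℕ, (T ^ k : Module.End ℂ (Mn n))
      = (1 - B * A) + (B * T ^ k - B * T ^ (k + 1)) := by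
    intro k
    have e2 : T ^ k * (B * A) = B * T ^ k - B * T ^ (k + 1) := by
      calc T ^ k * (B * A) = (T ^ k * B) * A := (mul_assoc _ _ _).symm
        _ = (B * T ^ k) * A := by rw [(hc.symm.pow_left k).eq]
        _ = B * (T ^ k * A) := mul_assoc _ _ _
        _ = B * T ^ k - B * T ^ (k + 1) := by rw [hTkA k, mul_sub]
    calc (T ^ k : Module.End ℂ (Mn n)) = T ^ k * ((1 - B * A) + B * A) := by
          rw [sub_add_cancel, mul_one]
      _ = (1 - B * A) + (B * T ^ k - B * T ^ (k + 1)) := by rw [mul_add, hTkfix k, e2]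
  -- key operator identity
  have key : ∀ N : ℕ, ∑ k ∈ Finset.range N, (T ^ k : Module.End ℂ (Mn n))
      = (N : ℂ) • (1 - B * A) + (B - B * T ^ N) := by
    intro N
    calc ∑ k ∈ Finset.range N, (T ^ k : Module.End ℂ (Mn n))
        = ∑ k ∈ Finset.range N, ((1 - B * A) + (B * T ^ k - B * T ^ (k + 1))) :=
          Finset.sum_congr rfl fun k _ => hpt k
      _ = (N : ℂ) • (1 - B * A) + (B - B * T ^ N) := by
          rw [Finset.sum_add_distrib, Finset.sum_const, Finset.card_range,
            Finset.sum_range_sub' (fun k => B * T ^ k), pow_zero, mul_one,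
            Nat.cast_smul_eq_nsmul]
  -- iterates of T applied to ρ
  have hTk : ∀ k : ℕ, ((T ^ k) ρ).PosSemidef ∧ ((T ^ k) ρ).trace = 1 := by
    intro k
    induction k with
    | zero => rw [pow_zero]; exact ⟨hρpsd, hρtr⟩
    | succ k ih =>
      rw [pow_succ', Module.End.mul_apply]
      exact ⟨hTpos _ ih.1, (hTtr _).trans ih.2⟩
  have hent : ∀ k : ℕ, nrm ((T ^ k) ρ) ≤ (n : ℝ)^2 := by
    intro k
    have h := nrm_le_card_mul ((T ^ k) ρ) 1 fun i j => by
      have := psd_entry_le (hTk k).1 i j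
      rw [(hTk k).2] at this
      simpa using this
    simpa using h
  -- constants
  set C : ℝ := ∑ p, ∑ q, nrm (B (Matrix.single p q 1)) with hC
  have hC0 : 0 ≤ C :=
    Finset.sum_nonneg fun p _ => Finset.sum_nonneg fun q _ => nrm_nonneg _
  set D : ℝ := C * (n : ℝ)^2 + nrm (B ρ) with hD
  -- main identity applied to ρ
  set σ : Mn n := ((1 : Module.End ℂ (Mn n)) - B * A) ρ with hσ
  have mainAp : ∀ N : ℕ, ((N : ℂ) + 1) • σ =
      (∑ k ∈ Finset.range (N + 1), (T ^ k) ρ) + (B ((T ^ (N + 1)) ρ) - B ρ) := by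
    intro N
    have hk := LinearMap.congr_fun (key (N + 1)) ρ
    simp only [LinearMap.sum_apply, LinearMap.add_apply, LinearMap.smul_apply,
      LinearMap.sub_apply, Module.End.mul_apply, Module.End.one_apply] at hk
    have hcast : (((N : ℕ) + 1 : ℕ) : ℂ) = (N : ℂ) + 1 := by push_cast; ring
    have hσ2 : σ = ρ - B (A ρ) := by
      rw [hσ]
      simp only [LinearMap.sub_apply, Module.End.one_apply, Module.End.mul_apply]
    rw [hcast, ← hσ2] at hk
    rw [hk]
    abel
  -- error bound
  have herr : ∀ N : ℕ, nrm (B ((T ^ (N + 1)) ρ) - B ρ) ≤ D := by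
    intro N
    refine (nrm_sub_le _ _).trans ?_
    have h1 : nrm (B ((T ^ (N + 1)) ρ)) ≤ C * (n : ℝ)^2 :=
      (nrm_end_le B _).trans (mul_le_mul_of_nonneg_left (hent (N + 1)) hC0)
    rw [hD]
    linarith
  -- Hermitian part
  have hherm : σ.IsHermitian := by
    show σᴴ = σ
    funext i j
    rw [conjTranspose_apply]
    rw [← sub_eq_zero]
    have hnorm : ∀ N : ℕ, ‖star (σ j i) - σ i j‖ ≤ (2 * D) / (N + 1) := by
      intro N
      have hm := mainAp N
      have hij := congrFun (congrFun hm i) j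
      have hji := congrFun (congrFun hm j) i
      set e : Mn n := B ((T ^ (N + 1)) ρ) - B ρ with he
      rw [Matrix.smul_apply, Matrix.add_apply, Matrix.sum_apply, smul_eq_mul] at hij hji
      have hconj : ((N : ℂ) + 1) * (star (σ j i) - σ i j) = star (e j i) - e i j := by
        have hstar := congrArg star hji
        rw [star_mul'] at hstar
        have hNr : star ((N : ℂ) + 1) = (N : ℂ) + 1 := by
          rw [Complex.star_def]
          simp
        rw [hNr, star_add, star_sum] at hstar
        have hsum : ∑ k ∈ Finset.range (N + 1), star (((T ^ k) ρ) j i)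
            = ∑ k ∈ Finset.range (N + 1), ((T ^ k) ρ) i j := by
          refine Finset.sum_congr rfl fun k _ => ?_
          have hH := (hTk k).1.isHermitian
          have := congrFun (congrFun hH i) j
          rwa [conjTranspose_apply] at this
        rw [hsum] at hstar
        rw [mul_sub, hstar, hij]
        ring
      have hnn : ‖(N : ℂ) + 1‖ = (N : ℝ) + 1 := by
        have : ((N : ℂ) + 1) = (((N + 1 : ℕ) : ℝ) : ℂ) := by push_cast; ring
        rw [this, Complex.norm_real, Real.norm_natCast]
        push_cast; ring
      have hNpos : (0:ℝ) < (N : ℝ) + 1 := by positivity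
      rw [le_div_iff₀ hNpos]
      calc ‖star (σ j i) - σ i j‖ * ((N:ℝ) + 1)
          = ‖((N : ℂ) + 1) * (star (σ j i) - σ i j)‖ := by
            rw [norm_mul, hnn]; ring
        _ = ‖star (e j i) - e i j‖ := by rw [hconj]
        _ ≤ ‖star (e j i)‖ + ‖e i j‖ := norm_sub_le _ _
        _ ≤ D + D := by
            rw [norm_star]
            exact add_le_add ((entry_le_nrm e j i).trans (herr N))
              ((entry_le_nrm e i j).trans (herr N))
        _ = 2 * D := by ring
    have : ‖star (σ j i) - σ i j‖ = 0 := by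
      refine eq_zero_of_forall_abs_le (D := 2 * D) fun N => ?_
      rw [abs_of_nonneg (norm_nonneg _)]
      exact hnorm N
    exact norm_eq_zero.mp this
  -- PSD part
  have hpsd : σ.PosSemidef := by
    refine Matrix.PosSemidef.of_dotProduct_mulVec_nonneg hherm fun v => ?_
    set s : ℂ := star v ⬝ᵥ σ *ᵥ v with hs
    set V : ℝ := ∑ i, ‖v i‖ with hV
    have hV0 : (0:ℝ) ≤ V := Finset.sum_nonneg fun _ _ => norm_nonneg _
    set K : ℝ := D * V^2 with hK
    have hform : ∀ N : ℕ, ∃ Q w : ℂ, ((N : ℂ) + 1) * s = Q + w ∧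
        0 ≤ Q.re ∧ Q.im = 0 ∧ ‖w‖ ≤ K := by
      intro N
      set e : Mn n := B ((T ^ (N + 1)) ρ) - B ρ with he
      refine ⟨∑ k ∈ Finset.range (N + 1), star v ⬝ᵥ ((T ^ k) ρ) *ᵥ v,
        star v ⬝ᵥ e *ᵥ v, ?_, ?_, ?_, ?_⟩
      · have hm := mainAp N
        have h2 := congrArg (fun M : Mn n => star v ⬝ᵥ M *ᵥ v) hm
        rw [smul_mulVec, dotProduct_smul, smul_eq_mul, add_mulVec, dotProduct_add,
          dot_sum_aux] at h2
        exact h2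
      · rw [Complex.re_sum]
        refine Finset.sum_nonneg fun k _ => ?_
        have h3 := (hTk k).1.dotProduct_mulVec_nonneg v
        rw [Complex.le_def] at h3
        simpa using h3.1
      · rw [Complex.im_sum]
        refine Finset.sum_eq_zero fun k _ => ?_
        have := (hTk k).1.dotProduct_mulVec_nonneg v
        rw [Complex.le_def] at this
        simpa using this.2.symm
      · refine (form_bound e v).trans ?_
        rw [hK]
        exact mul_le_mul_of_nonneg_right (herr N) (by positivity)
    have him : s.im = 0 := by
      refine eq_zero_of_forall_abs_le (D := K) fun N => ?_
      obtain ⟨Q, w, heq, _, hQim, hw⟩ := hform N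
      have hNpos : (0:ℝ) < (N : ℝ) + 1 := by positivity
      rw [le_div_iff₀ hNpos]
      have him2 : (((N : ℂ) + 1) * s).im = ((N:ℝ) + 1) * s.im := by
        have : ((N : ℂ) + 1) = (((N:ℝ) + 1 : ℝ) : ℂ) := by push_cast; ring
        rw [this, Complex.im_ofReal_mul]
      have := congrArg Complex.im heq
      rw [him2, Complex.add_im, hQim, zero_add] at this
      calc |s.im| * ((N:ℝ) + 1) = |((N:ℝ) + 1) * s.im| := by
            rw [abs_mul, abs_of_pos hNpos]; ring
        _ = |w.im| := by rw [this]
        _ ≤ ‖w‖ := Complex.abs_im_le_norm w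
        _ ≤ K := hw
    have hre : 0 ≤ s.re := by
      refine nonneg_of_forall_ge (D := K) fun N => ?_
      obtain ⟨Q, w, heq, hQre, _, hw⟩ := hform N
      have hNpos : (0:ℝ) < (N : ℝ) + 1 := by positivity
      have hre2 : (((N : ℂ) + 1) * s).re = ((N:ℝ) + 1) * s.re := by
        have : ((N : ℂ) + 1) = (((N:ℝ) + 1 : ℝ) : ℂ) := by push_cast; ring
        rw [this, Complex.re_ofReal_mul]
      have := congrArg Complex.re heq
      rw [hre2, Complex.add_re] at this
      have hwre : -K ≤ w.re := by
        have h1 : |w.re| ≤ K := (Complex.abs_re_le_norm w).trans hw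
        linarith [neg_abs_le w.re]
      rw [← neg_div, div_le_iff₀ hNpos]
      linarith
    rw [Complex.le_def]
    constructor
    · simpa using hre
    · simpa using him.symm
  exact ⟨hpsd, htrace, hinv⟩
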